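/- Let M ∈ U(2,1;O₇) fix q∞, i.e. M·(1,0,0)ᵗ is a complex scalar multiple of (1,0,0)ᵗ. Then M or −M lies in the subgroup of GL(3,ℂ) generated by the four matrices R₁, R₂, R₃, T. Equivalently, the stabiliser of q∞ in PU(2,1;O₇) = U(2,1;O₇)/{±I} is generated by the classes of R₁, R₂, R₃ and T. -/

import Mathlib

noncomputable section

open Matrix Complex

/-- The Gram matrix `J` of the Hermitian form of signature (2,1). -/
def Jmat : Matrix (Fin 3) (Fin 3) ℂ := !![0,0,1; 0,1,0; 1,0,0]

lemma Jmat_mul_Jmat : Jmat * Jmat = 1 := by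
  simp [Jmat, Matrix.mul_fin_three, Matrix.one_fin_three]

/-- A matrix satisfying `Mᴴ J M = J`, viewed as an element of `GL (Fin 3) ℂ`. -/
def toGL (M : Matrix (Fin 3) (Fin 3) ℂ) (h : Mᴴ * Jmat * M = Jmat) : GL (Fin 3) ℂ where
  val := M
  inv := Jmat * Mᴴ * Jmat
  inv_val := by
    calc (Jmat * Mᴴ * Jmat) * M = Jmat * (Mᴴ * Jmat * M) := by
          simp only [Matrix.mul_assoc]
    _ = 1 := by rw [h, Jmat_mul_Jmat]
  val_inv := by
    apply mul_eq_one_comm.mp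
    calc (Jmat * Mᴴ * Jmat) * M = Jmat * (Mᴴ * Jmat * M) := by
          simp only [Matrix.mul_assoc]
    _ = 1 := by rw [h, Jmat_mul_Jmat]

/-- `ω₇ = (1 + i√7)/2`. -/
def ω : ℂ := (1 + Complex.I * (√7 : ℝ)) / 2

/-- The ring of integers `O₇ = ℤ[ω₇]` of `ℚ(√-7)`, as a subset of `ℂ`. -/
def O7 : Set ℂ := {z | ∃ a b : ℤ, z = (a : ℂ) + (b : ℂ) * ω}

def I₀ : Matrix (Fin 3) (Fin 3) ℂ := !![0,0,1; 0,-1,0; 1,0,0]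

def R₁ : Matrix (Fin 3) (Fin 3) ℂ := !![1,0,0; 0,-1,0; 0,0,1]

def R₂ : Matrix (Fin 3) (Fin 3) ℂ := !![1, 1, -((starRingEnd ℂ) ω); 0,-1,1; 0,0,1]

def R₃ : Matrix (Fin 3) (Fin 3) ℂ := !![1, (starRingEnd ℂ) ω, -1; 0, -1, ω; 0,0,1]

def T : Matrix (Fin 3) (Fin 3) ℂ := !![1, 0, Complex.I*(√7:ℝ); 0,1,0; 0,0,1]

lemma hI₀ : I₀ᴴ * Jmat * I₀ = Jmat := by
  ext i j
  fin_cases i <;> fin_cases j <;>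
    simp [Matrix.mul_apply, Fin.sum_univ_three, Jmat, I₀, Matrix.conjTranspose_apply,
      Matrix.vecHead, Matrix.vecTail]

lemma hR₁ : R₁ᴴ * Jmat * R₁ = Jmat := by
  ext i j
  fin_cases i <;> fin_cases j <;>
    simp [Matrix.mul_apply, Fin.sum_univ_three, Jmat, R₁, Matrix.conjTranspose_apply,
      Matrix.vecHead, Matrix.vecTail]

lemma hR₂ : R₂ᴴ * Jmat * R₂ = Jmat := by
  ext i j
  fin_cases i <;> fin_cases j <;>
    simp [Matrix.mul_apply, Fin.sum_univ_three, Jmat, R₂, ω, Matrix.conjTranspose_apply,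
      Matrix.vecHead, Matrix.vecTail] <;>
    ring_nf <;>
    simp [Complex.ext_iff, ← Complex.ofReal_pow, Real.sq_sqrt] <;>
    ring_nf

lemma hR₃ : R₃ᴴ * Jmat * R₃ = Jmat := by
  ext i j
  fin_cases i <;> fin_cases j <;>
    simp [Matrix.mul_apply, Fin.sum_univ_three, Jmat, R₃, ω, Matrix.conjTranspose_apply,
      Matrix.vecHead, Matrix.vecTail] <;>
    ring_nf <;>
    simp [Complex.ext_iff, ← Complex.ofReal_pow, Real.sq_sqrt] <;>
    ring_nf

lemma hT : Tᴴ * Jmat * T = Jmat := by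
  ext i j
  fin_cases i <;> fin_cases j <;>
    simp [Matrix.mul_apply, Fin.sum_univ_three, Jmat, T, Matrix.conjTranspose_apply,
      Matrix.vecHead, Matrix.vecTail]


lemma ω_re : ω.re = 1/2 := by simp [ω]
lemma ω_im : ω.im = √7/2 := by simp [ω]
lemma sq7 : (√7:ℝ) * √7 = 7 := Real.mul_self_sqrt (by norm_num)

lemma conj_ω : (starRingEnd ℂ) ω = 1 - ω := by
  simp [Complex.ext_iff, ω_re, ω_im]; norm_num

lemma ω_mul_conj : ω * (starRingEnd ℂ) ω = 2 := by
  rw [conj_ω]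
  simp [Complex.ext_iff, Complex.mul_re, Complex.mul_im, ω_re, ω_im]
  constructor
  · nlinarith [sq7]
  · ring

lemma ω_sq : ω * ω = ω - 2 := by
  have h := ω_mul_conj
  rw [conj_ω] at h
  linear_combination -h

-- O7 closure lemmas
lemma O7_add {z w : ℂ} (hz : z ∈ O7) (hw : w ∈ O7) : z + w ∈ O7 := by
  obtain ⟨a,b,rfl⟩ := hz; obtain ⟨c,d,rfl⟩ := hw
  exact ⟨a+c, b+d, by push_cast; ring⟩

lemma O7_neg {z : ℂ} (hz : z ∈ O7) : -z ∈ O7 := by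
  obtain ⟨a,b,rfl⟩ := hz; exact ⟨-a,-b, by push_cast; ring⟩

lemma O7_mul {z w : ℂ} (hz : z ∈ O7) (hw : w ∈ O7) : z * w ∈ O7 := by
  obtain ⟨a,b,rfl⟩ := hz; obtain ⟨c,d,rfl⟩ := hw
  refine ⟨a*c - 2*(b*d), a*d + b*c + b*d, ?_⟩
  push_cast
  linear_combination (b:ℂ)*d*ω_sq

lemma O7_conj {z : ℂ} (hz : z ∈ O7) : (starRingEnd ℂ) z ∈ O7 := by
  obtain ⟨a,b,rfl⟩ := hz
  refine ⟨a+b, -b, ?_⟩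
  simp [conj_ω]; push_cast; ring

lemma O7_int (n : ℤ) : (n:ℂ) ∈ O7 := ⟨n, 0, by norm_num⟩

lemma O7_one : (1:ℂ) ∈ O7 := ⟨1, 0, by norm_num⟩

lemma O7_omega : ω ∈ O7 := ⟨0, 1, by norm_num⟩

lemma O7_normSq {a b : ℤ} : Complex.normSq ((a:ℂ) + (b:ℂ)*ω) = ((a^2 + a*b + 2*b^2 : ℤ) : ℝ) := by
  simp [Complex.normSq_apply, Complex.add_re, Complex.add_im, Complex.mul_re, Complex.mul_im,
    ω_re, ω_im]
  push_cast
  nlinarith [sq7]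

lemma O7_unit {z w : ℂ} (hz : z ∈ O7) (hw : w ∈ O7)
    (h : (starRingEnd ℂ) z * w = 1) : (z = 1 ∧ w = 1) ∨ (z = -1 ∧ w = -1) := by
  obtain ⟨a,b,hzab⟩ := hz
  have hn : Complex.normSq z * Complex.normSq w = 1 := by
    have := congrArg Complex.normSq h
    rwa [Complex.normSq_mul, Complex.normSq_conj, Complex.normSq_one] at this
  obtain ⟨c,d,hwcd⟩ := hw
  rw [hzab, hwcd, O7_normSq, O7_normSq] at hn
  have hn' : (a^2 + a*b + 2*b^2) * (c^2 + c*d + 2*d^2) = 1 := by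
    exact_mod_cast hn
  have hb : b = 0 ∧ (a = 1 ∨ a = -1) := by
    have h1 : a^2 + a*b + 2*b^2 = 1 := by
      rcases Int.isUnit_iff.mp (IsUnit.of_mul_eq_one _ hn') with h | h
      · exact h
      · nlinarith [sq_nonneg (2*a+b), sq_nonneg b, sq_nonneg (2*c+d), sq_nonneg d]
    have hb0 : b = 0 := by nlinarith [sq_nonneg (2*a+b), sq_nonneg b]
    subst hb0
    constructor
    · rfl
    · rcases Int.isUnit_iff.mp (IsUnit.of_mul_eq_one a (by linarith [h1] : a * a = 1)) with h|h
      · exact Or.inl h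
      · exact Or.inr h
  obtain ⟨hb0, ha⟩ := hb
  subst hb0
  rcases ha with ha | ha
  · left
    have hz1 : z = 1 := by rw [hzab, ha]; push_cast; ring
    refine ⟨hz1, ?_⟩
    rw [hz1] at h; simpa using h
  · right
    have hz1 : z = -1 := by rw [hzab, ha]; push_cast; ring
    refine ⟨hz1, ?_⟩
    rw [hz1] at h
    simp at h
    linear_combination -h



def Nmat (β γ : ℂ) : Matrix (Fin 3) (Fin 3) ℂ :=
  !![1, β, γ; 0, 1, -(starRingEnd ℂ) β; 0, 0, 1]

lemma Nmat_mul (β γ β' γ' : ℂ) :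
    Nmat β γ * Nmat β' γ' = Nmat (β+β') (γ + γ' - β * (starRingEnd ℂ) β') := by
  ext i j
  fin_cases i <;> fin_cases j <;>
    simp [Nmat, Matrix.mul_apply, Fin.sum_univ_three, map_add, Matrix.vecHead,
      Matrix.vecTail, -mul_eq_zero] <;> ring

lemma Nmat_zero : Nmat 0 0 = 1 := by
  ext i j
  fin_cases i <;> fin_cases j <;> simp [Nmat, Matrix.one_fin_three, Matrix.vecHead, Matrix.vecTail]

def Hgrp : Subgroup (GL (Fin 3) ℂ) :=
  Subgroup.closure ({toGL R₁ hR₁, toGL R₂ hR₂, toGL R₃ hR₃, toGL T hT} : Set (GL (Fin 3) ℂ))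

def Good (β γ : ℂ) : Prop :=
  β ∈ O7 ∧ γ ∈ O7 ∧ γ + (starRingEnd ℂ) γ = -(β * (starRingEnd ℂ) β) ∧
    ∃ U ∈ Hgrp, (U : Matrix (Fin 3) (Fin 3) ℂ) = Nmat β γ

lemma Good.ofEq {β γ β' γ' : ℂ} (h : Good β γ) (h1 : β = β') (h2 : γ = γ') : Good β' γ' := by
  subst h1; subst h2; exact h

lemma Good.mul {β γ β' γ' : ℂ} (h : Good β γ) (h' : Good β' γ') :
    Good (β + β') (γ + γ' - β * (starRingEnd ℂ) β') := by
  obtain ⟨hb, hg, hc, U, hU, hUv⟩ := h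
  obtain ⟨hb', hg', hc', V, hV, hVv⟩ := h'
  refine ⟨O7_add hb hb', ?_, ?_, U*V, mul_mem hU hV, ?_⟩
  · have := O7_add (O7_add hg hg') (O7_neg (O7_mul hb (O7_conj hb')))
    simpa [sub_eq_add_neg] using this
  · simp only [map_add, map_sub, _root_.map_mul, Complex.conj_conj]
    linear_combination hc + hc'
  · rw [Units.val_mul, hUv, hVv, Nmat_mul]

lemma Good.inv {β γ : ℂ} (h : Good β γ) : Good (-β) ((starRingEnd ℂ) γ) := by
  obtain ⟨hb, hg, hc, U, hU, hUv⟩ := h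
  refine ⟨O7_neg hb, O7_conj hg, ?_, U⁻¹, inv_mem hU, ?_⟩
  · simp only [map_neg, Complex.conj_conj, neg_mul_neg]
    linear_combination hc
  · have h2 : γ + (starRingEnd ℂ) γ - β * (starRingEnd ℂ) (-β) = 0 := by
      simp only [map_neg]
      linear_combination hc
    have hmul : (↑U : Matrix (Fin 3) (Fin 3) ℂ) * Nmat (-β) ((starRingEnd ℂ) γ) = 1 := by
      rw [hUv, Nmat_mul, add_neg_cancel, h2, Nmat_zero]
    calc (↑(U⁻¹) : Matrix (Fin 3) (Fin 3) ℂ)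
        = ↑(U⁻¹) * ((↑U : Matrix (Fin 3) (Fin 3) ℂ) * Nmat (-β) ((starRingEnd ℂ) γ)) := by
          rw [hmul, mul_one]
      _ = (↑(U⁻¹) * (↑U : Matrix (Fin 3) (Fin 3) ℂ)) * Nmat (-β) ((starRingEnd ℂ) γ) := by
          rw [mul_assoc]
      _ = Nmat (-β) ((starRingEnd ℂ) γ) := by
          rw [← Units.val_mul, inv_mul_cancel, Units.val_one, one_mul]

lemma good_zero : Good 0 0 :=
  ⟨⟨0,0, by simp⟩, ⟨0,0, by simp⟩, by simp, 1, one_mem _, by rw [Units.val_one, Nmat_zero]⟩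

lemma good_T : Good 0 (Complex.I * (√7:ℝ)) := by
  refine ⟨⟨0,0, by simp⟩, ⟨-1,2, by simp [ω]; ring⟩, by simp, toGL T hT,
    Subgroup.subset_closure (by simp), ?_⟩
  ext i j
  fin_cases i <;> fin_cases j <;> simp [toGL, T, Nmat]

lemma good_A : Good (-1) (-((starRingEnd ℂ) ω)) := by
  refine ⟨O7_neg O7_one, O7_neg (O7_conj O7_omega), ?_,
    toGL R₂ hR₂ * toGL R₁ hR₁,
    mul_mem (Subgroup.subset_closure (by simp)) (Subgroup.subset_closure (by simp)), ?_⟩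
  · simp only [map_neg, Complex.conj_conj, _root_.map_one]
    rw [conj_ω]; ring
  · rw [Units.val_mul]
    show R₂ * R₁ = _
    ext i j
    fin_cases i <;> fin_cases j <;>
      simp [R₂, R₁, Nmat, Matrix.mul_apply, Fin.sum_univ_three, Matrix.vecHead,
        Matrix.vecTail, -mul_eq_zero]

lemma good_B : Good (-((starRingEnd ℂ) ω)) (-1) := by
  refine ⟨O7_neg (O7_conj O7_omega), O7_neg O7_one, ?_,
    toGL R₃ hR₃ * toGL R₁ hR₁,
    mul_mem (Subgroup.subset_closure (by simp)) (Subgroup.subset_closure (by simp)), ?_⟩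
  · simp only [map_neg, Complex.conj_conj, neg_mul_neg, _root_.map_one]
    have h := ω_mul_conj
    rw [mul_comm] at h
    rw [h]; norm_num
  · rw [Units.val_mul]
    show R₃ * R₁ = _
    ext i j
    fin_cases i <;> fin_cases j <;>
      simp [R₃, R₁, Nmat, Matrix.mul_apply, Fin.sum_univ_three, Complex.conj_conj,
        Matrix.vecHead, Matrix.vecTail, -mul_eq_zero]

lemma good_central : ∀ c : ℤ, Good 0 ((c:ℂ) * (Complex.I * (√7:ℝ))) := by
  intro c
  induction c using Int.induction_on with
  | zero => exact good_zero.ofEq rfl (by simp)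
  | succ k ih => exact (ih.mul good_T).ofEq (by simp) (by push_cast; ring)
  | pred k ih => exact (ih.mul good_T.inv).ofEq (by simp) (by push_cast; simp only [_root_.map_mul, Complex.conj_I, Complex.conj_ofReal]; ring)

lemma good_row : ∀ m : ℤ, ∃ γ, Good (m:ℂ) γ := by
  intro m
  induction m using Int.induction_on with
  | zero => exact ⟨0, good_zero.ofEq (by simp) rfl⟩
  | succ k ih =>
      obtain ⟨γ, h⟩ := ih
      exact ⟨_, (h.mul good_A.inv).ofEq (by push_cast; ring) rfl⟩
  | pred k ih =>
      obtain ⟨γ, h⟩ := ih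
      exact ⟨_, (h.mul good_A).ofEq (by push_cast; ring) rfl⟩

lemma good_grid : ∀ m n : ℤ, ∃ γ, Good ((m:ℂ) + (n:ℂ) * ((starRingEnd ℂ) ω)) γ := by
  intro m n
  induction n using Int.induction_on with
  | zero =>
      obtain ⟨γ, h⟩ := good_row m
      exact ⟨γ, h.ofEq (by push_cast; ring) rfl⟩
  | succ k ih =>
      obtain ⟨γ, h⟩ := ih
      refine ⟨_, (h.mul good_B.inv).ofEq ?_ rfl⟩
      push_cast
      ring
  | pred k ih =>
      obtain ⟨γ, h⟩ := ih
      refine ⟨_, (h.mul good_B).ofEq ?_ rfl⟩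
      push_cast
      ring

lemma good_all {β γ : ℂ} (hβ : β ∈ O7) (hγ : γ ∈ O7)
    (hc : γ + (starRingEnd ℂ) γ = -(β * (starRingEnd ℂ) β)) :
    ∃ U ∈ Hgrp, (U : Matrix (Fin 3) (Fin 3) ℂ) = Nmat β γ := by
  obtain ⟨a, b, hab⟩ := hβ
  obtain ⟨γ₀, h0⟩ := good_grid (a+b) (-b)
  have h0' : Good β γ₀ := by
    refine h0.ofEq ?_ rfl
    rw [hab, conj_ω]
    push_cast
    ring
  obtain ⟨hb0, hg0, hc0, U0, hU0, hU0v⟩ := h0'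
  have hd : γ - γ₀ ∈ O7 := by
    have := O7_add hγ (O7_neg hg0)
    simpa [sub_eq_add_neg] using this
  obtain ⟨x, y, hxy⟩ := hd
  have hsum : ((2*x + y : ℤ) : ℂ) = 0 := by
    have h1 : (γ - γ₀) + (starRingEnd ℂ) (γ - γ₀) = 0 := by
      simp only [map_sub]
      linear_combination hc - hc0
    rw [hxy] at h1
    simp only [map_add, _root_.map_mul, conj_ω, map_intCast] at h1
    push_cast
    linear_combination h1
  have hy : y = -2*x := by
    have : (2*x + y : ℤ) = 0 := by exact_mod_cast hsum
    omega
  have hδ : γ - γ₀ = ((-x : ℤ):ℂ) * (Complex.I * (√7:ℝ)) := by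
    have hi7 : (Complex.I * (√7:ℝ)) = 2 * ω - 1 := by
      simp [ω]; ring
    rw [hxy, hy, hi7]
    push_cast
    ring
  have h2 := (good_central (-x)).mul ⟨hb0, hg0, hc0, U0, hU0, hU0v⟩
  have hfin : Good β γ := h2.ofEq (by ring) (by rw [← hδ]; ring)
  exact hfin.2.2.2


/-- **Generators of the stabiliser of `q∞` in `PU(2,1;O7)`**: every matrix
`M ∈ U(2,1;O7)` fixing `q∞` (i.e. mapping `(1,0,0)ᵗ` to a scalar multiple of itself)
agrees, up to sign, with an element of the subgroup of `GL(3,ℂ)` generated by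
`R₁, R₂, R₃, T`. -/
theorem stabiliser_O7_generated
    (M : Matrix (Fin 3) (Fin 3) ℂ)
    (hM : ∀ i j, M i j ∈ O7)
    (hU : Mᴴ * Jmat * M = Jmat)
    (hfix : ∃ c : ℂ, M.mulVec ![1,0,0] = c • ![1,0,0]) :
    ∃ U ∈ Subgroup.closure
        ({toGL R₁ hR₁, toGL R₂ hR₂, toGL R₃ hR₃, toGL T hT} :
          Set (GL (Fin 3) ℂ)),
      (U : Matrix (Fin 3) (Fin 3) ℂ) = M ∨ (U : Matrix (Fin 3) (Fin 3) ℂ) = -M := by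
  obtain ⟨c, hc⟩ := hfix
  have h10 : M 1 0 = 0 := by
    have := congrFun hc 1
    simpa [Matrix.mulVec, dotProduct, Fin.sum_univ_three] using this
  have h20 : M 2 0 = 0 := by
    have := congrFun hc 2
    simpa [Matrix.mulVec, dotProduct, Fin.sum_univ_three] using this
  have e02 := congrFun (congrFun hU 0) 2
  have e01 := congrFun (congrFun hU 0) 1
  have e11 := congrFun (congrFun hU 1) 1
  have e12 := congrFun (congrFun hU 1) 2
  have e22 := congrFun (congrFun hU 2) 2
  simp [Matrix.mul_apply, Fin.sum_univ_three, Jmat, Matrix.conjTranspose_apply, h10, h20,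
    Matrix.vecHead, Matrix.vecTail, -mul_eq_zero] at e02 e01 e11 e12 e22
  have ha := O7_unit (hM 0 0) (hM 2 2) e02
  have h21 : M 2 1 = 0 := by
    rcases ha with ⟨h1,h2⟩|⟨h1,h2⟩ <;> rw [h1] at e01 <;> simpa using e01
  rw [h21] at e11 e12
  simp only [map_zero, zero_mul, mul_zero, add_zero, zero_add] at e11 e12
  have hd := O7_unit (hM 1 1) (hM 1 1) e11
  rcases ha with ⟨h00, h22⟩ | ⟨h00, h22⟩
  · rw [h22] at e12 e22
    rcases hd with ⟨h11, -⟩ | ⟨h11, -⟩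
    · -- M00 = 1, M11 = 1
      rw [h11] at e12
      have h12 : M 1 2 = -((starRingEnd ℂ) (M 0 1)) := by
        simp only [_root_.map_one, one_mul, mul_one] at e12
        linear_combination e12
      have hcon : M 0 2 + (starRingEnd ℂ) (M 0 2) = -(M 0 1 * (starRingEnd ℂ) (M 0 1)) := by
        rw [h12] at e22
        simp only [_root_.map_one, one_mul, mul_one, map_neg, Complex.conj_conj] at e22
        linear_combination e22
      obtain ⟨U, hUm, hUv⟩ := good_all (hM 0 1) (hM 0 2) hcon
      refine ⟨U, hUm, Or.inl ?_⟩
      rw [hUv]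
      ext i j
      fin_cases i <;> fin_cases j <;>
        simp [Nmat, Matrix.vecHead, Matrix.vecTail, h00, h11, h22, h10, h20, h21, h12]
    · -- M00 = 1, M11 = -1
      rw [h11] at e12
      have h12 : M 1 2 = (starRingEnd ℂ) (M 0 1) := by
        simp only [map_neg, _root_.map_one, one_mul, mul_one, neg_mul] at e12
        linear_combination -e12
      have hcon : M 0 2 + (starRingEnd ℂ) (M 0 2)
          = -((-(M 0 1)) * (starRingEnd ℂ) (-(M 0 1))) := by
        rw [h12] at e22
        simp only [_root_.map_one, one_mul, mul_one, map_neg, Complex.conj_conj] at e22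
        simp only [map_neg]
        linear_combination e22
      obtain ⟨U, hUm, hUv⟩ := good_all (O7_neg (hM 0 1)) (hM 0 2) hcon
      refine ⟨U * toGL R₁ hR₁, mul_mem hUm
        (Subgroup.subset_closure (Set.mem_insert _ _)), Or.inl ?_⟩
      rw [Units.val_mul, hUv]
      have hR : (↑(toGL R₁ hR₁) : Matrix (Fin 3) (Fin 3) ℂ) = R₁ := rfl
      rw [hR]
      ext i j
      fin_cases i <;> fin_cases j <;>
        simp [Nmat, R₁, Matrix.mul_apply, Fin.sum_univ_three, Matrix.vecHead,
          Matrix.vecTail, -mul_eq_zero, h00, h11, h22, h10, h20, h21, h12]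
  · rw [h22] at e12 e22
    rcases hd with ⟨h11, -⟩ | ⟨h11, -⟩
    · -- M00 = -1, M11 = 1
      rw [h11] at e12
      have h12 : M 1 2 = (starRingEnd ℂ) (M 0 1) := by
        simp only [map_neg, _root_.map_one, one_mul, mul_one, mul_neg] at e12
        linear_combination e12
      have hcon : -(M 0 2) + (starRingEnd ℂ) (-(M 0 2))
          = -(M 0 1 * (starRingEnd ℂ) (M 0 1)) := by
        rw [h12] at e22
        simp only [map_neg, _root_.map_one, one_mul, mul_one, mul_neg,
          Complex.conj_conj] at e22
        simp only [map_neg]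
        linear_combination e22
      obtain ⟨U, hUm, hUv⟩ := good_all (hM 0 1) (O7_neg (hM 0 2)) hcon
      refine ⟨U * toGL R₁ hR₁, mul_mem hUm
        (Subgroup.subset_closure (Set.mem_insert _ _)), Or.inr ?_⟩
      rw [Units.val_mul, hUv]
      have hR : (↑(toGL R₁ hR₁) : Matrix (Fin 3) (Fin 3) ℂ) = R₁ := rfl
      rw [hR]
      ext i j
      fin_cases i <;> fin_cases j <;>
        simp [Nmat, R₁, Matrix.mul_apply, Fin.sum_univ_three, Matrix.vecHead,
          Matrix.vecTail, -mul_eq_zero, h00, h11, h22, h10, h20, h21, h12]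
    · -- M00 = -1, M11 = -1
      rw [h11] at e12
      have h12 : M 1 2 = -((starRingEnd ℂ) (M 0 1)) := by
        simp only [map_neg, _root_.map_one, one_mul, mul_one, mul_neg, neg_mul] at e12
        linear_combination -e12
      have hcon : -(M 0 2) + (starRingEnd ℂ) (-(M 0 2))
          = -((-(M 0 1)) * (starRingEnd ℂ) (-(M 0 1))) := by
        rw [h12] at e22
        simp only [map_neg, _root_.map_one, one_mul, mul_one, mul_neg, neg_mul,
          Complex.conj_conj] at e22
        simp only [map_neg]
        linear_combination e22
      obtain ⟨U, hUm, hUv⟩ := good_all (O7_neg (hM 0 1)) (O7_neg (hM 0 2)) hcon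
      refine ⟨U, hUm, Or.inr ?_⟩
      rw [hUv]
      ext i j
      fin_cases i <;> fin_cases j <;>
        simp [Nmat, Matrix.vecHead, Matrix.vecTail, h00, h11, h22, h10, h20, h21, h12]

end
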